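/- arXiv:0902.0844 — 3 statements merged into one kernel-verified Lean document; each statement's English description precedes it below -/
import Mathlib

section
/- Let K be a difference subfield of U (σ(K) ⊆ K) and a a finite tuple from U with σ(a) ∈ K(a)^alg. Then there is a constant D' ∈ ℕ such that for every k > 0, μ(σ^k(a)/K(a)) ≤ D'·μ(σ^k(a)/K^inv(a)). -/
/- Setting: a large algebraically closed field `U` with an automorphism `σ`.
   Tuples are maps `Fin n → U`; for a tuple `t`, the relevant set of coordinates
   is `Set.range t`.  `fAdj E s` is the subfield `E(s)` generated by a subfield
   `E` and a set `s`, and `deg E s` is the degree `μ(s/E) = [E(s):E]`. -/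

set_option maxHeartbeats 1000000
set_option synthInstance.maxHeartbeats 1000000

open Filter Set

variable {U : Type*}

/-- The subfield `E(s)` generated by the subfield `E` and the set `s`. -/
noncomputable def fAdj [Field U] (E : Subfield U) (s : Set U) : Subfield U :=
  (IntermediateField.adjoin E s).toSubfield

/-- The degree `μ(s/E) = [E(s):E]` (as `Module.finrank`; it is `0` when infinite). -/
noncomputable def deg [Field U] (E : Subfield U) (s : Set U) : ℕ :=
  Module.finrank E (IntermediateField.adjoin E s)

/-- `k ↦ μ(σ^{k+1}(s) / K(s, σ(s), …, σ^k(s)))`: the sequence whose eventual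
value is the limit degree `ld(s/K)`. -/
noncomputable def ldSeq [Field U] (σ : U ≃+* U) (K : Subfield U) (s : Set U) (k : ℕ) : ℕ :=
  deg (fAdj K (⋃ i ∈ Set.Iic k, ⇑(σ ^ i) '' s)) (⇑(σ ^ (k + 1)) '' s)

/-- `k ↦ μ(σ^k(s) / K(s))`: the sequence whose `k`-th roots converge to the
distant degree `dd(s/K)`. -/
noncomputable def ddSeq [Field U] (σ : U ≃+* U) (K : Subfield U) (s : Set U) (k : ℕ) : ℕ :=
  deg (fAdj K s) (⇑(σ ^ k) '' s)

/-- The inversive closure `K^inv = ⋃ₙ σ^{-n}(K)`. -/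
noncomputable def Kinv [Field U] (σ : U ≃+* U) (K : Subfield U) : Subfield U :=
  ⨆ n : ℕ, K.map (σ⁻¹ ^ n : U ≃+* U).toRingHom

/-- The difference field `K(s)_σ = K(σ^i(s) : i ∈ ℕ)` generated by `s` over `K`. -/
noncomputable def diffAdj [Field U] (σ : U ≃+* U) (K : Subfield U) (s : Set U) : Subfield U :=
  fAdj K (⋃ i : ℕ, ⇑(σ ^ i) '' s)

section Aux
open IntermediateField Polynomial

variable {U : Type*} [Field U] {E F G : Subfield U} {S T : Set U}

theorem fAdj_eq_closure (E : Subfield U) (S : Set U) : fAdj E S = Subfield.closure (↑E ∪ S) := by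
  show (IntermediateField.adjoin E S).toSubfield = _
  rw [IntermediateField.adjoin_toSubfield,
    show Set.range ⇑(algebraMap (↥E) U) = (E : Set U) from Subtype.range_coe]

theorem fAdj_le_iff : fAdj E S ≤ G ↔ E ≤ G ∧ S ⊆ ↑G := by
  rw [fAdj_eq_closure, Subfield.closure_le, Set.union_subset_iff]
  exact and_congr_left' (by exact ⟨fun h x hx => h hx, fun h x hx => h hx⟩)

theorem le_fAdj : E ≤ fAdj E S := (fAdj_le_iff.mp le_rfl).1

theorem subset_fAdj : S ⊆ ↑(fAdj E S) := (fAdj_le_iff.mp le_rfl).2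

theorem fAdj_mono (hEF : E ≤ F) (hST : S ⊆ T) : fAdj E S ≤ fAdj F T :=
  fAdj_le_iff.mpr ⟨hEF.trans le_fAdj, hST.trans subset_fAdj⟩

theorem fAdj_fAdj : fAdj (fAdj E S) T = fAdj E (S ∪ T) :=
  le_antisymm (fAdj_le_iff.mpr ⟨fAdj_mono le_rfl Set.subset_union_left,
      Set.subset_union_right.trans subset_fAdj⟩)
    (fAdj_le_iff.mpr ⟨le_fAdj.trans (le_fAdj (S := T)), Set.union_subset
      (subset_fAdj.trans (SetLike.coe_subset_coe.mpr (le_fAdj (S := T)))) subset_fAdj⟩)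

theorem fAdj_eq_self (h : S ⊆ ↑E) : fAdj E S = E :=
  le_antisymm (fAdj_le_iff.mpr ⟨le_rfl, h⟩) le_fAdj

theorem deg_eq_relfinrank (E : Subfield U) (S : Set U) :
    deg E S = Subfield.relfinrank E (fAdj E S) := by
  rw [Subfield.relfinrank_eq_finrank_of_le (le_fAdj (E := E) (S := S))]
  have h : Subfield.extendScalars (le_fAdj (E := E) (S := S)) = IntermediateField.adjoin E S := by
    ext x
    rw [Subfield.mem_extendScalars]
    exact Iff.rfl
  rw [h]; rfl

theorem deg_union (E : Subfield U) (S T : Set U) :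
    deg E (S ∪ T) = deg E S * deg (fAdj E S) T := by
  rw [deg_eq_relfinrank, deg_eq_relfinrank, deg_eq_relfinrank, fAdj_fAdj]
  exact (Subfield.relfinrank_mul_relfinrank le_fAdj (fAdj_mono le_rfl Set.subset_union_left)).symm

theorem deg_of_subset (h : S ⊆ ↑E) : deg E S = 1 := by
  rw [deg_eq_relfinrank, fAdj_eq_self h, Subfield.relfinrank_self]

theorem fAdj_map (f : U →+* U) (E : Subfield U) (S : Set U) :
    (fAdj E S).map f = fAdj (E.map f) (f '' S) := by
  rw [fAdj_eq_closure, fAdj_eq_closure]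
  refine le_antisymm (Subfield.map_le_iff_le_comap.mpr (Subfield.closure_le.mpr ?_))
    (Subfield.closure_le.mpr ?_)
  · intro x hx
    show f x ∈ Subfield.closure _
    apply Subfield.subset_closure
    rcases hx with h1 | h2
    · exact Or.inl ⟨x, h1, rfl⟩
    · exact Or.inr ⟨x, h2, rfl⟩
  · rw [Subfield.coe_map, ← Set.image_union]
    exact Set.image_mono Subfield.subset_closure

theorem deg_map (f : U →+* U) (E : Subfield U) (S : Set U) :
    deg (E.map f) (f '' S) = deg E S := by
  rw [deg_eq_relfinrank, deg_eq_relfinrank, ← fAdj_map]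
  exact Subfield.relfinrank_map_map E (fAdj E S) f

theorem minpoly_transport {E F : Subfield U} (ψ : ↥E →+* ↥F) (ι : U →+* U)
    (hcomm : ∀ x : ↥E, (algebraMap ↥F U) (ψ x) = ι ((algebraMap ↥E U) x))
    {t : U} (ht : IsIntegral ↥E t) :
    IsIntegral ↥F (ι t) ∧ (minpoly ↥F (ι t)).natDegree ≤ (minpoly ↥E t).natDegree := by
  set p := minpoly ↥E t with hp
  have hm : p.Monic := minpoly.monic ht
  set q := p.map ψ with hq
  have hqm : q.Monic := hm.map ψ
  have hq0 : Polynomial.aeval (ι t) q = 0 := by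
    rw [Polynomial.aeval_def, hq, Polynomial.eval₂_map,
      show (algebraMap ↥F U).comp ψ = ι.comp (algebraMap ↥E U) from RingHom.ext hcomm,
      ← Polynomial.hom_eval₂, ← Polynomial.aeval_def, minpoly.aeval, map_zero]
  refine ⟨⟨q, hqm, hq0⟩, ?_⟩
  have h1 := minpoly.min (A := ↥F) (x := ι t) hqm hq0
  have h2 : q.natDegree = p.natDegree := Polynomial.natDegree_map ψ
  exact h2 ▸ Polynomial.natDegree_le_natDegree h1

theorem isIntegral_of_le (h : E ≤ F) {t : U} (ht : IsIntegral ↥E t) : IsIntegral ↥F t := by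
  have h2 := minpoly_transport (E := E) (F := F) (Subfield.inclusion h) (RingHom.id U)
    (fun _ => rfl) ht
  exact h2.1

theorem minpoly_natDegree_antitone (h : E ≤ F) {t : U} (ht : IsIntegral ↥E t) :
    (minpoly ↥F t).natDegree ≤ (minpoly ↥E t).natDegree := by
  have h2 := minpoly_transport (E := E) (F := F) (Subfield.inclusion h) (RingHom.id U)
    (fun _ => rfl) ht
  exact h2.2

theorem isIntegral_map (f : U →+* U) {t : U} (ht : IsIntegral ↥E t) :
    IsIntegral ↥(E.map f) (f t) := by
  have hmem : ∀ x : ↥E, f x ∈ E.map f := fun x => ⟨x, x.2, rfl⟩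
  have h2 := minpoly_transport (E := E) (F := E.map f)
    ((f.comp E.subtype).codRestrict (E.map f) hmem) f (fun _ => rfl) ht
  exact h2.1

theorem integral_of_mem {t : U} (h : t ∈ E) : IsIntegral ↥E t := by
  have : t = algebraMap ↥E U ⟨t, h⟩ := rfl
  rw [this]
  exact isIntegral_algebraMap

theorem deg_singleton {t : U} (ht : IsIntegral ↥E t) :
    deg E {t} = (minpoly ↥E t).natDegree := IntermediateField.adjoin.finrank ht

theorem deg_pos (hS : S.Finite) (h : ∀ x ∈ S, IsIntegral ↥E x) : 0 < deg E S := by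
  haveI := hS.to_subtype
  haveI : FiniteDimensional ↥E (IntermediateField.adjoin ↥E S) :=
    IntermediateField.finiteDimensional_adjoin h
  exact Module.finrank_pos

theorem integral_of_deg_pos (h : 0 < deg E S) {x : U} (hx : x ∈ fAdj E S) :
    IsIntegral ↥E x := by
  haveI : Module.Finite ↥E ↥(IntermediateField.adjoin ↥E S) := Module.finite_of_finrank_pos h
  have h2 : IsIntegral ↥E (⟨x, hx⟩ : IntermediateField.adjoin ↥E S) := IsIntegral.of_finite ↥E _
  exact h2.map (IsScalarTower.toAlgHom ↥E (IntermediateField.adjoin ↥E S) U)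

theorem deg_base_antitone (hEF : E ≤ F) (hS : S.Finite) (hint : ∀ x ∈ S, IsIntegral ↥E x) :
    deg F S ≤ deg E S := by
  refine Set.Finite.induction_on
    (motive := fun S _ => (∀ x ∈ S, IsIntegral ↥E x) → deg F S ≤ deg E S) S hS
    (fun _ => by simp [deg_of_subset (Set.empty_subset _)]) ?_ hint
  intro a S' _ hS' IH hint
  have hintS' : ∀ x ∈ S', IsIntegral ↥E x := fun x hx => hint x (Set.mem_insert_of_mem a hx)
  have ha : IsIntegral ↥E a := hint a (Set.mem_insert a S')
  have ha1 : IsIntegral ↥(fAdj E S') a := isIntegral_of_le le_fAdj ha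
  have ha2 : IsIntegral ↥(fAdj F S') a :=
    isIntegral_of_le (fAdj_mono hEF subset_rfl) ha1
  rw [Set.insert_eq, Set.union_comm, deg_union, deg_union,
    deg_singleton ha1, deg_singleton ha2]
  exact Nat.mul_le_mul (IH hintS') (minpoly_natDegree_antitone (fAdj_mono hEF subset_rfl) ha1)

theorem fAdj_iSup (F : ℕ → Subfield U) (T : Set U) :
    fAdj (⨆ n, F n) T = ⨆ n, fAdj (F n) T := by
  refine le_antisymm (fAdj_le_iff.mpr ⟨iSup_mono fun n => le_fAdj, ?_⟩)
    (iSup_le fun n => fAdj_mono (le_iSup F n) subset_rfl)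
  exact subset_fAdj.trans (SetLike.coe_subset_coe.mpr (le_iSup (fun n => fAdj (F n) T) 0))

theorem minpoly_iSup {F : ℕ → Subfield U} (hmono : Monotone F) {t : U}
    (ht : IsIntegral ↥(F 0) t) :
    ∃ n, (minpoly ↥(F n) t).natDegree ≤ (minpoly ↥(⨆ m, F m) t).natDegree := by
  set G := ⨆ m, F m with hG
  have hFG : ∀ n, F n ≤ G := fun n => le_iSup F n
  have htG : IsIntegral ↥G t := isIntegral_of_le (hFG 0) ht
  set p := minpoly ↥G t with hp
  set P := p.map (algebraMap ↥G U) with hP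
  have hPc : ∀ i, P.coeff i ∈ G := fun i => by
    rw [hP, Polynomial.coeff_map]; exact (p.coeff i).2
  have hchoice : ∀ i : Fin (P.natDegree + 1), ∃ n, P.coeff i ∈ F n := fun i =>
    (Subfield.mem_iSup_of_directed hmono.directed_le).mp (hPc i)
  choose nf hnf using hchoice
  set N := Finset.univ.sup nf with hN
  have hcN : ∀ i, P.coeff i ∈ F N := by
    intro i
    by_cases hi : i ≤ P.natDegree
    · exact hmono (Finset.le_sup (Finset.mem_univ ⟨i, Nat.lt_succ_of_le hi⟩))
        (hnf ⟨i, Nat.lt_succ_of_le hi⟩)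
    · rw [Polynomial.coeff_eq_zero_of_natDegree_lt (Nat.lt_of_not_le hi)]
      exact zero_mem _
  set q : Polynomial ↥(F N) :=
    ∑ i ∈ Finset.range (P.natDegree + 1), Polynomial.monomial i (⟨P.coeff i, hcN i⟩ : ↥(F N))
    with hq
  have hqP : q.map (algebraMap ↥(F N) U) = P := by
    rw [hq, Polynomial.map_sum]
    simp only [Polynomial.map_monomial]
    exact (P.as_sum_range' _ (Nat.lt_succ_self _)).symm
  have hPmonic : P.Monic := (minpoly.monic htG).map _
  have hP0 : P ≠ 0 := hPmonic.ne_zero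
  have hq0 : q ≠ 0 := fun h => hP0 (by rw [← hqP, h, Polynomial.map_zero])
  have hqdeg : q.natDegree = P.natDegree := by
    rw [← hqP, Polynomial.natDegree_map]
  have haev : Polynomial.aeval t q = 0 := by
    rw [Polynomial.aeval_def, Polynomial.eval₂_eq_eval_map, hqP, hP,
      Polynomial.eval_map, ← Polynomial.aeval_def, minpoly.aeval]
  refine ⟨N, ?_⟩
  have hd := minpoly.degree_le_of_ne_zero ↥(F N) t hq0 haev
  have h3 : (minpoly ↥(F N) t).natDegree ≤ q.natDegree := Polynomial.natDegree_le_natDegree hd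
  rw [hqdeg] at h3
  rwa [show P.natDegree = p.natDegree from by rw [hP, Polynomial.natDegree_map]] at h3

theorem deg_iSup_le {F : ℕ → Subfield U} (hmono : Monotone F) {T : Set U} (hT : T.Finite)
    (hint : ∀ x ∈ T, IsIntegral ↥(F 0) x) :
    ∃ n, deg (F n) T ≤ deg (⨆ m, F m) T := by
  refine Set.Finite.induction_on
    (motive := fun T _ => (∀ x ∈ T, IsIntegral ↥(F 0) x) → ∃ n, deg (F n) T ≤ deg (⨆ m, F m) T) T hT
    (fun _ => ⟨0, by simp [deg_of_subset (Set.empty_subset _)]⟩) ?_ hint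
  intro a T' _ hT' IH hint
  have hintT' : ∀ x ∈ T', IsIntegral ↥(F 0) x := fun x hx => hint x (Set.mem_insert_of_mem a hx)
  obtain ⟨n₁, hn₁⟩ := IH hintT'
  have ha : IsIntegral ↥(F 0) a := hint a (Set.mem_insert a T')
  have hmono' : Monotone (fun m => fAdj (F m) T') := fun i j hij => fAdj_mono (hmono hij) subset_rfl
  have ha' : IsIntegral ↥(fAdj (F 0) T') a := isIntegral_of_le le_fAdj ha
  obtain ⟨n₂, hn₂⟩ := minpoly_iSup hmono' ha'
  rw [show (⨆ m, fAdj (F m) T') = fAdj (⨆ m, F m) T' from (fAdj_iSup F T').symm] at hn₂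
  refine ⟨max n₁ n₂, ?_⟩
  rw [Set.insert_eq, Set.union_comm, deg_union, deg_union]
  have hG : ∀ n, F n ≤ ⨆ m, F m := fun n => le_iSup F n
  have haG : IsIntegral ↥(fAdj (⨆ m, F m) T') a :=
    isIntegral_of_le (fAdj_mono (hG 0) subset_rfl) ha'
  have han : IsIntegral ↥(fAdj (F (max n₁ n₂)) T') a :=
    isIntegral_of_le (fAdj_mono (hmono (Nat.zero_le _)) subset_rfl) ha'
  have han2 : IsIntegral ↥(fAdj (F n₂) T') a :=
    isIntegral_of_le (fAdj_mono (hmono (Nat.zero_le _)) subset_rfl) ha'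
  rw [deg_singleton han, deg_singleton haG]
  refine Nat.mul_le_mul ?_ ?_
  · calc deg (F (max n₁ n₂)) T' ≤ deg (F n₁) T' :=
          deg_base_antitone (hmono (le_max_left _ _)) hT'
            (fun x hx => isIntegral_of_le (hmono (Nat.zero_le _)) (hintT' x hx))
      _ ≤ _ := hn₁
  · calc (minpoly ↥(fAdj (F (max n₁ n₂)) T') a).natDegree
        ≤ (minpoly ↥(fAdj (F n₂) T') a).natDegree :=
          minpoly_natDegree_antitone (hmono' (le_max_right _ _)) han2
      _ ≤ _ := hn₂

end Aux

section Aux2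

variable {U : Type*} [Field U]

theorem deg_map_equiv (e : U ≃+* U) (E : Subfield U) (S : Set U) :
    deg (E.map (e : U →+* U)) (⇑e '' S) = deg E S := by
  have h := deg_map (e : U →+* U) E S
  rwa [RingEquiv.coe_toRingHom] at h

theorem fAdj_map_equiv (e : U ≃+* U) (E : Subfield U) (S : Set U) :
    (fAdj E S).map (e : U →+* U) = fAdj (E.map (e : U →+* U)) (⇑e '' S) := by
  have h := fAdj_map (e : U →+* U) E S
  rwa [RingEquiv.coe_toRingHom] at h

/-- `TT σ s k = s ∪ σ(s) ∪ ⋯ ∪ σ^k(s)`. -/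
private noncomputable def TT (σ : U ≃+* U) (s : Set U) (k : ℕ) : Set U :=
  ⋃ i ∈ Set.Iic k, ⇑(σ ^ i) '' s

variable (σ : U ≃+* U) (s : Set U)

theorem ldSeq_eq (K : Subfield U) (k : ℕ) :
    ldSeq σ K s k = deg (fAdj K (TT σ s k)) (⇑(σ ^ (k + 1)) '' s) := rfl

theorem sPow_image (a b : ℕ) (X : Set U) :
    ⇑(σ ^ a) '' (⇑(σ ^ b) '' X) = ⇑(σ ^ (a + b)) '' X := by
  rw [← Set.image_comp, show ⇑(σ ^ a) ∘ ⇑(σ ^ b) = ⇑(σ ^ (a + b)) from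
    funext fun x => by rw [pow_add]; rfl]

theorem sPow_zero_image (X : Set U) : ⇑(σ ^ 0) '' X = X := by
  rw [pow_zero, show ⇑(1 : U ≃+* U) = id from rfl, Set.image_id]

theorem mem_TT {x : U} {m : ℕ} : x ∈ TT σ s m ↔ ∃ i ≤ m, x ∈ ⇑(σ ^ i) '' s := by
  simp [TT]

theorem subset_TT {i m : ℕ} (h : i ≤ m) : ⇑(σ ^ i) '' s ⊆ TT σ s m :=
  fun x hx => (mem_TT σ s).mpr ⟨i, h, hx⟩

theorem s_subset_TT (m : ℕ) : s ⊆ TT σ s m := fun x hx =>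
  (mem_TT σ s).mpr ⟨0, Nat.zero_le m, by rwa [sPow_zero_image]⟩

theorem TT_zero : TT σ s 0 = s := by
  ext x
  rw [mem_TT]
  constructor
  · rintro ⟨i, hi, hx⟩
    rwa [Nat.le_zero.mp hi, sPow_zero_image] at hx
  · intro hx
    exact ⟨0, le_rfl, by rwa [sPow_zero_image]⟩

theorem TT_succ (m : ℕ) : TT σ s (m + 1) = TT σ s m ∪ ⇑(σ ^ (m + 1)) '' s := by
  ext x
  rw [mem_TT, Set.mem_union, mem_TT]
  constructor
  · rintro ⟨i, hi, hx⟩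
    rcases Nat.lt_succ_iff_lt_or_eq.mp (Nat.lt_succ_of_le hi) with h | rfl
    · exact Or.inl ⟨i, Nat.lt_succ_iff.mp h, hx⟩
    · exact Or.inr hx
  · rintro (⟨i, hi, hx⟩ | hx)
    · exact ⟨i, hi.trans (Nat.le_succ m), hx⟩
    · exact ⟨m + 1, le_rfl, hx⟩

theorem TT_finite (hs : s.Finite) (m : ℕ) : (TT σ s m).Finite :=
  Set.Finite.biUnion (Set.finite_Iic m) fun i _ => hs.image _

theorem image_TT_subset (n i : ℕ) : ⇑(σ ^ n) '' TT σ s i ⊆ TT σ s (n + i) := by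
  rintro x ⟨y, hy, rfl⟩
  obtain ⟨j, hj, hyj⟩ := (mem_TT σ s).mp hy
  have : (σ ^ n) y ∈ ⇑(σ ^ (n + j)) '' s := by
    rw [← sPow_image]
    exact ⟨y, hyj, rfl⟩
  exact subset_TT σ s (Nat.add_le_add_left hj n) this

theorem fAdj_TT_eq (K : Subfield U) (m : ℕ) :
    fAdj (fAdj K s) (TT σ s m) = fAdj K (TT σ s m) := by
  rw [fAdj_fAdj, Set.union_eq_self_of_subset_left (s_subset_TT σ s m)]

theorem degTT_prod (K : Subfield U) (k : ℕ) :
    deg (fAdj K s) (TT σ s k) = ∏ i ∈ Finset.range k, ldSeq σ K s i := by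
  induction k with
  | zero =>
    rw [TT_zero, Finset.range_zero, Finset.prod_empty]
    exact deg_of_subset subset_fAdj
  | succ m IH =>
    rw [TT_succ, deg_union, IH, fAdj_TT_eq, Finset.prod_range_succ, ldSeq_eq]

theorem degTT_split (K : Subfield U) (k : ℕ) :
    deg (fAdj K s) (TT σ s k) =
      ddSeq σ K s k * deg (fAdj K (s ∪ ⇑(σ ^ k) '' s)) (TT σ s k) := by
  conv_lhs => rw [show TT σ s k = ⇑(σ ^ k) '' s ∪ TT σ s k from
    (Set.union_eq_self_of_subset_left (subset_TT σ s le_rfl)).symm]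
  rw [deg_union, fAdj_fAdj]
  rfl

end Aux2

/-- if `σ(K) ⊆ K` and `σ(a) ∈ K(a)^alg`, there is `D'` with
`μ(σ^k(a)/K(a)) ≤ D'·μ(σ^k(a)/K^inv(a))` for all `k > 0`. -/
theorem stmt2 [Field U] [IsAlgClosed U] (σ : U ≃+* U) (K : Subfield U)
    (hK : ∀ x ∈ K, σ x ∈ K) {n : ℕ} (a : Fin n → U)
    (ha : ∀ i, IsAlgebraic (fAdj K (Set.range a)) (σ (a i))) :
    ∃ D' : ℕ, ∀ k : ℕ, 0 < k →
      ddSeq σ K (Set.range a) k ≤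
        D' * deg (fAdj (Kinv σ K) (Set.range a)) (⇑(σ ^ k) '' Set.range a) := by
  classical
  set s : Set U := Set.range a with hs_def
  have hsfin : s.Finite := Set.finite_range a
  -- σ(s) is integral over K(s)
  have hs1 : ∀ x ∈ ⇑(σ ^ 1) '' s, IsIntegral ↥(fAdj K s) x := by
    rintro x ⟨y, ⟨i, rfl⟩, rfl⟩
    rw [pow_one]
    exact (ha i).isIntegral
  -- iterates of hK
  have hKpow : ∀ m, ∀ x ∈ K, (σ ^ m) x ∈ K := by
    intro m
    induction m with
    | zero => intro x hx; rw [pow_zero]; exact hx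
    | succ m IH =>
      intro x hx
      rw [pow_succ]
      exact IH (σ x) (hK x hx)
  have hMapLe : ∀ m, K.map ((σ ^ m : U ≃+* U) : U →+* U) ≤ K := by
    rintro m x ⟨y, hy, rfl⟩
    exact hKpow m y hy
  have hMapLe1 : K.map ((σ : U ≃+* U) : U →+* U) ≤ K := by
    rintro x ⟨y, hy, rfl⟩
    exact hK y hy
  -- the family defining Kinv is monotone
  have hMnMono : Monotone (fun m => K.map ((σ⁻¹ ^ m : U ≃+* U)).toRingHom) := by
    apply monotone_nat_of_le_succ
    rintro m x ⟨y, hy, rfl⟩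
    refine ⟨σ y, hK y hy, ?_⟩
    show (σ⁻¹ ^ (m + 1)) (σ y) = (σ⁻¹ ^ m) y
    rw [pow_succ]
    show (σ⁻¹ ^ m) (σ⁻¹ (σ y)) = _
    rw [show σ⁻¹ (σ y) = y from σ.symm_apply_apply y]
  have hMn0 : K.map ((σ⁻¹ ^ 0 : U ≃+* U)).toRingHom = K := by
    ext x
    constructor
    · rintro ⟨y, hy, rfl⟩
      rwa [show ((σ⁻¹ ^ 0 : U ≃+* U)).toRingHom y = y from by rw [pow_zero]; rfl]
    · intro hx
      exact ⟨x, hx, by rw [pow_zero]; rfl⟩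
  have hKKv : K ≤ Kinv σ K := by
    have h := le_iSup (fun m => K.map ((σ⁻¹ ^ m : U ≃+* U)).toRingHom) 0
    rw [hMn0] at h
    exact h
  have hMnK : ∀ m, (K.map ((σ⁻¹ ^ m : U ≃+* U)).toRingHom).map
      ((σ ^ m : U ≃+* U) : U →+* U) = K := by
    intro m
    rw [Subfield.map_map]
    have hcomp : ((σ ^ m : U ≃+* U) : U →+* U).comp ((σ⁻¹ ^ m : U ≃+* U)).toRingHom
        = RingHom.id U := by
      ext x
      show (σ ^ m) ((σ⁻¹ ^ m) x) = x
      rw [inv_pow]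
      exact (σ ^ m).apply_symm_apply x
    rw [hcomp]
    ext x
    constructor
    · rintro ⟨y, hy, rfl⟩; exact hy
    · intro hx; exact ⟨x, hx, rfl⟩
  -- transporting integrality through powers of σ
  have hmapint : ∀ (e : U ≃+* U) (W : Set U), (⇑e '' s ⊆ W) → ∀ {y : U},
      IsIntegral ↥(fAdj K s) y → IsIntegral ↥(fAdj (K.map (e : U →+* U)) W) (e y) := by
    intro e W hW y hy
    have h1 : IsIntegral ↥((fAdj K s).map (e : U →+* U)) (e y) := isIntegral_map _ hy
    rw [fAdj_map_equiv] at h1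
    exact isIntegral_of_le (fAdj_mono le_rfl hW) h1
  have himg2 : ∀ j : ℕ, ⇑σ '' (⇑(σ ^ j) '' s) = ⇑(σ ^ (j + 1)) '' s := by
    intro j
    rw [show ⇑σ = ⇑(σ ^ 1) from by rw [pow_one], sPow_image σ 1 j s,
      show 1 + j = j + 1 from Nat.add_comm 1 j]
  have hA' : ∀ m, ∀ x ∈ ⇑(σ ^ (m + 1)) '' s,
      IsIntegral ↥(fAdj (K.map ((σ ^ m : U ≃+* U) : U →+* U)) (⇑(σ ^ m) '' s)) x := by
    intro m x hx
    rw [← sPow_image σ m 1 s] at hx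
    obtain ⟨y, hy, rfl⟩ := hx
    exact hmapint (σ ^ m) (⇑(σ ^ m) '' s) subset_rfl (hs1 y hy)
  -- the fields K(s, σ(s), …, σ^m(s)) are finite over K(s)
  have hPhi : ∀ m, 0 < deg (fAdj K s) (TT σ s m) := by
    intro m
    induction m with
    | zero =>
      rw [TT_zero, deg_of_subset subset_fAdj]
      exact one_pos
    | succ m IH =>
      rw [TT_succ, deg_union]
      refine Nat.mul_pos IH (deg_pos (hsfin.image _) ?_)
      intro x hx
      refine isIntegral_of_le ?_ (hA' m x hx)
      rw [fAdj_TT_eq]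
      exact fAdj_mono (hMapLe m) (subset_TT σ s le_rfl)
  have hM4 : ∀ m, ∀ x ∈ ⇑(σ ^ m) '' s, IsIntegral ↥(fAdj K s) x := by
    intro m x hx
    exact integral_of_deg_pos (hPhi m) (subset_fAdj (subset_TT σ s le_rfl hx))
  have hTTint : ∀ m, ∀ x ∈ TT σ s m, IsIntegral ↥(fAdj K s) x := by
    intro m x hx
    obtain ⟨i, _, hxi⟩ := (mem_TT σ s).mp hx
    exact hM4 i x hxi
  -- the limit degree sequence over K is non-increasing
  have hdanti : ∀ i, ldSeq σ K s (i + 1) ≤ ldSeq σ K s i := by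
    intro i
    have e1 : ldSeq σ K s i =
        deg (fAdj (K.map ((σ : U ≃+* U) : U →+* U)) (⇑σ '' TT σ s i))
          (⇑(σ ^ (i + 1 + 1)) '' s) := by
      rw [ldSeq_eq, ← deg_map_equiv σ (fAdj K (TT σ s i)) (⇑(σ ^ (i + 1)) '' s),
        fAdj_map_equiv, himg2 (i + 1)]
    rw [e1, ldSeq_eq]
    refine deg_base_antitone ?_ (hsfin.image _) ?_
    · refine fAdj_mono hMapLe1 ?_
      have h := image_TT_subset σ s 1 i
      rw [pow_one] at h
      rwa [show 1 + i = i + 1 from Nat.add_comm 1 i] at h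
    · intro x hx
      rw [← himg2 (i + 1)] at hx
      obtain ⟨y, hy, rfl⟩ := hx
      exact hmapint σ (⇑σ '' TT σ s i) (Set.image_mono (s_subset_TT σ s i))
        (hM4 (i + 1) y hy)
  have hAnti : Antitone (fun i => ldSeq σ K s i) := antitone_nat_of_succ_le hdanti
  -- pick the place where the limit degree stabilizes
  obtain ⟨N, hN⟩ : ∃ N, ∀ m, ldSeq σ K s N ≤ ldSeq σ K s m := by
    obtain ⟨N, hNd⟩ := Nat.sInf_mem (Set.range_nonempty (fun i => ldSeq σ K s i))
    refine ⟨N, fun m => ?_⟩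
    have h2 : ldSeq σ K s N = sInf (Set.range fun i => ldSeq σ K s i) := hNd
    rw [h2]
    exact Nat.sInf_le ⟨m, rfl⟩
  have hconst : ∀ m, N ≤ m → ldSeq σ K s m = ldSeq σ K s N :=
    fun m hm => le_antisymm (hAnti hm) (hN m)
  -- positivity of the limit degree sequences
  have hdpos : ∀ i, 0 < ldSeq σ K s i := by
    intro i
    rw [ldSeq_eq]
    refine deg_pos (hsfin.image _) ?_
    intro x hx
    exact isIntegral_of_le (fAdj_mono le_rfl (s_subset_TT σ s i)) (hM4 (i + 1) x hx)
  have hd'pos : ∀ i, 0 < ldSeq σ (Kinv σ K) s i := by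
    intro i
    rw [ldSeq_eq]
    refine deg_pos (hsfin.image _) ?_
    intro x hx
    exact isIntegral_of_le (fAdj_mono hKKv (s_subset_TT σ s i)) (hM4 (i + 1) x hx)
  -- the limit degree sequence over Kinv dominates the stable value
  have hd'ge : ∀ i, ldSeq σ K s N ≤ ldSeq σ (Kinv σ K) s i := by
    intro i
    have hF'mono : Monotone (fun m => fAdj (K.map ((σ⁻¹ ^ m : U ≃+* U)).toRingHom)
        (TT σ s i)) := fun p q hpq => fAdj_mono (hMnMono hpq) subset_rfl
    have hF'0int : ∀ x ∈ ⇑(σ ^ (i + 1)) '' s,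
        IsIntegral ↥(fAdj (K.map ((σ⁻¹ ^ 0 : U ≃+* U)).toRingHom) (TT σ s i)) x := by
      intro x hx
      rw [hMn0]
      exact isIntegral_of_le (fAdj_mono le_rfl (s_subset_TT σ s i)) (hM4 (i + 1) x hx)
    obtain ⟨nn, hnn⟩ := deg_iSup_le hF'mono (hsfin.image _) hF'0int
    rw [← fAdj_iSup] at hnn
    have hsup : (⨆ m, K.map ((σ⁻¹ ^ m : U ≃+* U)).toRingHom) = Kinv σ K := rfl
    rw [hsup] at hnn
    have e2 : deg (fAdj (K.map ((σ⁻¹ ^ nn : U ≃+* U)).toRingHom) (TT σ s i))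
        (⇑(σ ^ (i + 1)) '' s)
        = deg (fAdj K (⇑(σ ^ nn) '' TT σ s i)) (⇑(σ ^ (nn + i + 1)) '' s) := by
      rw [← deg_map_equiv (σ ^ nn)
        (fAdj (K.map ((σ⁻¹ ^ nn : U ≃+* U)).toRingHom) (TT σ s i)) (⇑(σ ^ (i + 1)) '' s),
        fAdj_map_equiv, hMnK nn, sPow_image σ nn (i + 1) s]
      rfl
    have e3 : ldSeq σ K s (nn + i) ≤
        deg (fAdj K (⇑(σ ^ nn) '' TT σ s i)) (⇑(σ ^ (nn + i + 1)) '' s) := by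
      rw [ldSeq_eq]
      refine deg_base_antitone (fAdj_mono le_rfl (image_TT_subset σ s nn i))
        (hsfin.image _) ?_
      intro x hx
      have hx' : x ∈ ⇑(σ ^ (nn + (i + 1))) '' s := hx
      rw [← sPow_image σ nn (i + 1) s] at hx'
      obtain ⟨y, hy, rfl⟩ := hx' 
      exact isIntegral_of_le (fAdj_mono (hMapLe nn) subset_rfl)
        (hmapint (σ ^ nn) (⇑(σ ^ nn) '' TT σ s i)
          (Set.image_mono (s_subset_TT σ s i)) (hM4 (i + 1) y hy))
    calc ldSeq σ K s N ≤ ldSeq σ K s (nn + i) := hN (nn + i)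
      _ ≤ _ := e3
      _ = _ := e2.symm
      _ ≤ _ := hnn
      _ = ldSeq σ (Kinv σ K) s i := (ldSeq_eq σ s (Kinv σ K) i).symm
  -- product comparison
  have hProdLe : ∀ k, (∏ i ∈ Finset.range k, ldSeq σ K s i) ≤
      (∏ i ∈ Finset.range N, ldSeq σ K s i) *
        ∏ i ∈ Finset.range k, ldSeq σ (Kinv σ K) s i := by
    intro k
    by_cases hk : k ≤ N
    · calc (∏ i ∈ Finset.range k, ldSeq σ K s i)
          ≤ ∏ i ∈ Finset.range N, ldSeq σ K s i :=
            Finset.prod_le_prod_of_subset_of_one_le' (Finset.range_subset_range.mpr hk)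
              (fun i _ _ => hdpos i)
        _ = (∏ i ∈ Finset.range N, ldSeq σ K s i) * 1 := (mul_one _).symm
        _ ≤ _ := Nat.mul_le_mul_left _ (Finset.one_le_prod' fun i _ => hd'pos i)
    · push_neg at hk
      have hsplit : (∏ i ∈ Finset.range k, ldSeq σ K s i) =
          (∏ i ∈ Finset.range N, ldSeq σ K s i) * ∏ i ∈ Finset.Ico N k, ldSeq σ K s i := by
        rw [Finset.range_eq_Ico, ← Finset.prod_Ico_consecutive _ (Nat.zero_le N) hk.le,
          ← Finset.range_eq_Ico]
      rw [hsplit]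
      refine Nat.mul_le_mul_left _ ?_
      calc (∏ i ∈ Finset.Ico N k, ldSeq σ K s i)
          ≤ ∏ i ∈ Finset.Ico N k, ldSeq σ (Kinv σ K) s i :=
            Finset.prod_le_prod' (fun i hi => by
              rw [hconst i (Finset.mem_Ico.mp hi).1]; exact hd'ge i)
        _ ≤ _ := Finset.prod_le_prod_of_subset_of_one_le'
            (by rw [Finset.range_eq_Ico]; exact Finset.Ico_subset_Ico (Nat.zero_le N) le_rfl)
            (fun i _ _ => hd'pos i)
  -- final assembly
  refine ⟨∏ i ∈ Finset.range N, ldSeq σ K s i, fun k _ => ?_⟩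
  have hRle : deg (fAdj (Kinv σ K) (s ∪ ⇑(σ ^ k) '' s)) (TT σ s k)
      ≤ deg (fAdj K (s ∪ ⇑(σ ^ k) '' s)) (TT σ s k) := by
    refine deg_base_antitone (fAdj_mono hKKv subset_rfl) (TT_finite σ s hsfin k) ?_
    intro x hx
    exact isIntegral_of_le (fAdj_mono le_rfl Set.subset_union_left) (hTTint k x hx)
  have hR'pos : 0 < deg (fAdj (Kinv σ K) (s ∪ ⇑(σ ^ k) '' s)) (TT σ s k) := by
    refine deg_pos (TT_finite σ s hsfin k) ?_
    intro x hx
    exact isIntegral_of_le (fAdj_mono hKKv Set.subset_union_left) (hTTint k x hx)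
  have hmain : ddSeq σ K s k * deg (fAdj (Kinv σ K) (s ∪ ⇑(σ ^ k) '' s)) (TT σ s k) ≤
      ((∏ i ∈ Finset.range N, ldSeq σ K s i) * ddSeq σ (Kinv σ K) s k) *
        deg (fAdj (Kinv σ K) (s ∪ ⇑(σ ^ k) '' s)) (TT σ s k) := by
    calc ddSeq σ K s k * deg (fAdj (Kinv σ K) (s ∪ ⇑(σ ^ k) '' s)) (TT σ s k)
        ≤ ddSeq σ K s k * deg (fAdj K (s ∪ ⇑(σ ^ k) '' s)) (TT σ s k) :=
          Nat.mul_le_mul_left _ hRle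
      _ = deg (fAdj K s) (TT σ s k) := (degTT_split σ s K k).symm
      _ = ∏ i ∈ Finset.range k, ldSeq σ K s i := degTT_prod σ s K k
      _ ≤ (∏ i ∈ Finset.range N, ldSeq σ K s i) *
            ∏ i ∈ Finset.range k, ldSeq σ (Kinv σ K) s i := hProdLe k
      _ = (∏ i ∈ Finset.range N, ldSeq σ K s i) *
            deg (fAdj (Kinv σ K) s) (TT σ s k) := by rw [degTT_prod σ s (Kinv σ K) k]
      _ = (∏ i ∈ Finset.range N, ldSeq σ K s i) *
            (ddSeq σ (Kinv σ K) s k *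
              deg (fAdj (Kinv σ K) (s ∪ ⇑(σ ^ k) '' s)) (TT σ s k)) := by
            rw [degTT_split σ s (Kinv σ K) k]
      _ = _ := (mul_assoc _ _ _).symm
  have hfin := Nat.le_of_mul_le_mul_right hmain hR'pos
  exact hfin
end

section
/- Let K be a difference subfield of U with σ(K) = K and a a finite tuple with σ(a) ∈ K(a)^alg. For every n ≥ 1, the distant degree of a over K computed with respect to the automorphism σ^n equals the n-th power of the one computed for σ: lim_{k→∞} μ(σ^{nk}(a)/K(a))^{1/k} = dd(a/K)^n (in particular this limit exists). -/
/- Setting: a large algebraically closed field `U` with an automorphism `σ`.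
   Tuples are maps `Fin n → U`; for a tuple `t`, the relevant set of coordinates
   is `Set.range t`.  `fAdj E s` is the subfield `E(s)` generated by a subfield
   `E` and a set `s`, and `deg E s` is the degree `μ(s/E) = [E(s):E]`. -/

set_option maxHeartbeats 1000000
set_option synthInstance.maxHeartbeats 1000000

open Filter Set

variable {U : Type*}

/-- for every `n ≥ 1`, the distant degree of `a` over `K`
computed for the automorphism `σ^n` equals `dd(a/K)^n`:
`lim_k μ(σ^{nk}(a)/K(a))^{1/k} = dd(a/K)^n` (in particular the limit exists). -/
theorem stmt11 [Field U] [IsAlgClosed U] (σ : U ≃+* U) (K : Subfield U)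
    (hK : K.map σ.toRingHom = K) {n : ℕ} (a : Fin n → U)
    (ha : ∀ i, IsAlgebraic (fAdj K (Set.range a)) (σ (a i)))
    (Da : ℝ)
    (hDa : Tendsto (fun k => (ddSeq σ K (Set.range a) k : ℝ) ^ (1 / (k : ℝ)))
      atTop (nhds Da)) :
    ∀ m : ℕ, 1 ≤ m →
      Tendsto (fun k => (ddSeq (σ ^ m) K (Set.range a) k : ℝ) ^ (1 / (k : ℝ)))
        atTop (nhds (Da ^ m)) := by
  intro m hm
  have hm0 : (m : ℝ) ≠ 0 := by positivity
  have hsub : Tendsto (fun k => m * k) atTop atTop :=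
    tendsto_atTop_mono (fun k => Nat.le_mul_of_pos_left k (by omega)) tendsto_id
  have h1 := (hDa.comp hsub).pow m
  refine h1.congr fun k => ?_
  have hdd : ddSeq (σ ^ m) K (Set.range a) k = ddSeq σ K (Set.range a) (m * k) := by
    unfold ddSeq
    rw [pow_mul]
  simp only [Function.comp]
  rw [hdd, ← Real.rpow_natCast
      ((ddSeq σ K (Set.range a) (m * k) : ℝ) ^ (1 / ((m * k : ℕ) : ℝ))) m,
    ← Real.rpow_mul (by positivity)]
  congr 1
  push_cast
  rcases eq_or_ne (k : ℝ) 0 with h | h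
  · simp [h]
  · field_simp
end

section
/- Let G be a Hausdorff topological group, U a compact open subgroup of G, and V a compact subgroup of G such that the index [V : V ∩ U] equals N < ∞. Then there exists a compact open subgroup W₀ of G containing V with [W₀ : W₀ ∩ U] = N, which contains every subgroup with these properties: every compact subgroup W of G with V ⊆ W and [W : W ∩ U] = N satisfies W ⊆ W₀. -/
set_option maxHeartbeats 1000000
set_option synthInstance.maxHeartbeats 1000000

open Pointwise

/-- Key algebraic lemma: if `V ≤ W` and `[V : V ∩ U] = N > 0`, then
`[W : W ∩ U] = N` iff `W ⊆ V * U` as sets. -/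
private lemma stmt19_key {G : Type*} [Group G] (U V W : Subgroup G)
    (N : ℕ) (hNpos : 0 < N) (hN : Subgroup.relIndex U V = N) (hVW : V ≤ W) :
    Subgroup.relIndex U W = N ↔ (W : Set G) ⊆ (V : Set G) * (U : Set G) := by
  classical
  -- the induced map on quotients
  let f : V ⧸ U.subgroupOf V → W ⧸ U.subgroupOf W :=
    Quotient.map' (Subgroup.inclusion hVW) (by
      intro a b hab
      rw [QuotientGroup.leftRel_apply] at hab ⊢
      rw [Subgroup.mem_subgroupOf] at hab ⊢
      simpa using hab)
  have hf : ∀ v : V, f (Quotient.mk'' v) = Quotient.mk'' (Subgroup.inclusion hVW v) :=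
    fun v => rfl
  have finj : Function.Injective f := by
    intro a b
    refine Quotient.inductionOn₂' a b ?_
    intro a b h
    rw [hf, hf, Quotient.eq''] at h
    rw [Quotient.eq'']
    rw [QuotientGroup.leftRel_apply, Subgroup.mem_subgroupOf] at h ⊢
    simpa using h
  have hcardV : Nat.card (V ⧸ U.subgroupOf V) = N := hN
  constructor
  · intro hW
    have hcardW : Nat.card (W ⧸ U.subgroupOf W) = N := hW
    have hfin : Finite (W ⧸ U.subgroupOf W) :=
      Nat.finite_of_card_ne_zero (by omega)
    have hbij : Function.Bijective f :=
      (Nat.bijective_iff_injective_and_card f).mpr ⟨finj, by rw [hcardV, hcardW]⟩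
    intro w hw
    obtain ⟨q, hq⟩ := hbij.2 (Quotient.mk'' ⟨w, hw⟩)
    revert hq
    refine Quotient.inductionOn' q ?_
    intro v hq
    rw [hf, Quotient.eq'', QuotientGroup.leftRel_apply, Subgroup.mem_subgroupOf] at hq
    refine ⟨v, v.2, (v : G)⁻¹ * w, by simpa using hq, by group⟩
  · intro hsub
    have fsurj : Function.Surjective f := by
      intro q
      refine Quotient.inductionOn' q fun w => ?_
      obtain ⟨v, hv, u, hu, huv⟩ := hsub w.2
      refine ⟨Quotient.mk'' ⟨v, hv⟩, ?_⟩
      rw [hf, Quotient.eq'', QuotientGroup.leftRel_apply, Subgroup.mem_subgroupOf]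
      have : (v : G)⁻¹ * w = u := by rw [← huv]; group
      simpa [this] using hu
    have := Nat.card_eq_of_bijective f ⟨finj, fsurj⟩
    calc Subgroup.relIndex U W = Nat.card (W ⧸ U.subgroupOf W) := rfl
      _ = Nat.card (V ⧸ U.subgroupOf V) := this.symm
      _ = N := hcardV

/-- in a Hausdorff topological group `G`, given a compact open
subgroup `U` and a compact subgroup `V` with `[V : V ∩ U] = N < ∞`, there is a
compact open subgroup `W₀ ⊇ V` with `[W₀ : W₀ ∩ U] = N` containing every
compact subgroup `W ⊇ V` with `[W : W ∩ U] = N`.  Here `[W : W ∩ U]` is the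
relative index `Subgroup.relIndex U W` (which is `0` when infinite). -/
theorem stmt19 {G : Type*} [Group G] [TopologicalSpace G] [IsTopologicalGroup G] [T2Space G]
    (U V : Subgroup G) (hUc : IsCompact (U : Set G)) (hUo : IsOpen (U : Set G))
    (hVc : IsCompact (V : Set G)) (N : ℕ) (hNpos : 0 < N)
    (hN : Subgroup.relIndex U V = N) :
    ∃ W₀ : Subgroup G, IsCompact (W₀ : Set G) ∧ IsOpen (W₀ : Set G) ∧ V ≤ W₀ ∧
      Subgroup.relIndex U W₀ = N ∧
      ∀ W : Subgroup G, IsCompact (W : Set G) → V ≤ W →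
        Subgroup.relIndex U W = N → W ≤ W₀ := by
  classical
  set S : Set G := (V : Set G) * (U : Set G) with hSdef
  have hSc : IsCompact S := hVc.mul hUc
  have hSo : IsOpen S := hUo.mul_left
  have hScl : IsClosed S := hSc.isClosed
  have hone : (1 : G) ∈ S := ⟨1, V.one_mem, 1, U.one_mem, mul_one 1⟩
  -- W₀ is the stabilizer of S under left translation
  set W₀ : Subgroup G := MulAction.stabilizer G S with hW₀def
  have memW₀ : ∀ g : G, g ∈ W₀ ↔ g • S = S := fun g => Iff.rfl
  have mem_of : ∀ g : G, (∀ x ∈ S, g * x ∈ S) → (∀ x ∈ S, g⁻¹ * x ∈ S) → g ∈ W₀ := by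
    intro g h1 h2
    rw [memW₀]
    apply subset_antisymm
    · rintro _ ⟨x, hx, rfl⟩
      exact h1 x hx
    · intro x hx
      exact ⟨g⁻¹ * x, h2 x hx, by simp⟩
  -- any subgroup W with V ≤ W and W ⊆ S is contained in W₀
  have sub_of : ∀ W : Subgroup G, V ≤ W → (W : Set G) ⊆ S → W ≤ W₀ := by
    intro W hVW hWS w hw
    have step : ∀ y : G, y ∈ W → ∀ x ∈ S, y * x ∈ S := by
      intro y hy x hx
      obtain ⟨v, hv, u, hu, rfl⟩ := hx
      have : y * v ∈ S := hWS (W.mul_mem hy (hVW hv))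
      obtain ⟨v', hv', u', hu', h⟩ := this
      refine ⟨v', hv', u' * u, U.mul_mem hu' hu, ?_⟩
      have h' : v' * u' = y * v := h
      show v' * (u' * u) = y * (v * u)
      rw [← mul_assoc, h', mul_assoc]
    exact mem_of w (step w hw) (step w⁻¹ (W.inv_mem hw))
  have hVS : (V : Set G) ⊆ S := fun v hv => ⟨v, hv, 1, U.one_mem, mul_one v⟩
  have hVW₀ : V ≤ W₀ := sub_of V le_rfl hVS
  have hW₀S : (W₀ : Set G) ⊆ S := by
    intro g hg
    have : g • S = S := (memW₀ g).mp hg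
    rw [← this]
    exact ⟨1, hone, by simp⟩
  -- W₀ is closed
  have hW₀cl : IsClosed (W₀ : Set G) := by
    have : (W₀ : Set G) =
        (⋂ s ∈ S, (fun g : G => g * s) ⁻¹' S) ∩ (⋂ s ∈ S, (fun g : G => g⁻¹ * s) ⁻¹' S) := by
      ext g
      simp only [Set.mem_inter_iff, Set.mem_iInter, Set.mem_preimage]
      constructor
      · intro hg
        have h1 : g • S = S := (memW₀ g).mp hg
        have h2 : g⁻¹ • S = S := (memW₀ g⁻¹).mp (W₀.inv_mem hg)
        constructor
        · intro s hs; rw [← h1]; exact ⟨s, hs, rfl⟩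
        · intro s hs; rw [← h2]; exact ⟨s, hs, rfl⟩
      · rintro ⟨h1, h2⟩
        exact mem_of g h1 h2
    rw [this]
    apply IsClosed.inter
    · exact isClosed_biInter fun s _ => hScl.preimage (continuous_mul_right s)
    · exact isClosed_biInter fun s _ =>
        hScl.preimage ((continuous_inv).mul continuous_const)
  have hW₀c : IsCompact (W₀ : Set G) := hSc.of_isClosed_subset hW₀cl hW₀S
  -- W₀ is open
  have hW₀o : IsOpen (W₀ : Set G) := by
    obtain ⟨T, hT, hTS⟩ := compact_open_separated_mul_left hSc hSo le_rfl
    apply Subgroup.isOpen_of_mem_nhds (g := 1)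
    have hTinv : T ∩ T⁻¹ ∈ nhds (1 : G) :=
      Filter.inter_mem hT (inv_mem_nhds_one G hT)
    refine Filter.mem_of_superset hTinv ?_
    intro g hg
    refine mem_of g (fun x hx => hTS ?_) (fun x hx => hTS ?_)
    · exact Set.mul_mem_mul hg.1 hx
    · exact Set.mul_mem_mul hg.2 hx
  refine ⟨W₀, hW₀c, hW₀o, hVW₀, ?_, ?_⟩
  · exact (stmt19_key U V W₀ N hNpos hN hVW₀).mpr hW₀S
  · intro W _ hVW hWrel
    exact sub_of W hVW ((stmt19_key U V W N hNpos hN hVW).mp hWrel)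
end
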